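/- Let β = 1. Fix integers n, n_c ≥ 2 with n_c dividing n and reals p ∈ (0,1), q ∈ [p,1] such that pn_c/q and pn are integers and pn > q. Let Π partition [n] into n_c clusters of size n/n_c. Stage 1 selects pn_c/q clusters uniformly at random and lets U be their union; Stage 2, conditional on U, lets z^1 be a uniformly random size-(pn) subset of U and z^0 = ∅. Define L_j = Σ_{i : j ∈ N_i} c_{i,{j}} for j ∈ [n] and L̄_π = (n_c/n) Σ_{j∈π} L_j for π ∈ Π. Then Var( TTE-hat ) = ((1−q)/(pn−q)) · Var̂_{j∈[n]}(L_j) + ((q−p)(pn−1)/(p(n_c−1)(pn−q))) · Var̂_{π∈Π}(L̄_π). -/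

import Mathlib

open Finset

private lemma count_single {α : Type*} [DecidableEq α] (S : Finset α) (m : ℕ) (hm : 1 ≤ m)
    {j : α} (hj : j ∈ S) :
    ((S.powersetCard m).filter (fun A => j ∈ A)).card = (S.card - 1).choose (m - 1) := by
  rw [← card_erase_of_mem hj, ← card_powersetCard]
  apply Finset.card_bij (fun A _ => A.erase j)
  · intro A hA
    simp only [mem_filter, mem_powersetCard] at hA
    rw [mem_powersetCard]
    exact ⟨erase_subset_erase j hA.1.1, by rw [card_erase_of_mem hA.2, hA.1.2]⟩
  · intro A hA A' hA' h
    simp only [mem_filter] at hA hA'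
    rw [← insert_erase hA.2, ← insert_erase hA'.2, h]
  · intro B hB
    rw [mem_powersetCard] at hB
    have hjB : j ∉ B := fun h => (mem_erase.1 (hB.1 h)).1 rfl
    refine ⟨insert j B, ?_, by rw [erase_insert hjB]⟩
    simp only [mem_filter, mem_powersetCard]
    refine ⟨⟨insert_subset hj (hB.1.trans (erase_subset _ _)), ?_⟩, mem_insert_self _ _⟩
    rw [card_insert_of_notMem hjB, hB.2]
    omega

private lemma count_pair {α : Type*} [DecidableEq α] (S : Finset α) (m : ℕ) (hm : 2 ≤ m)
    {j k : α} (hj : j ∈ S) (hk : k ∈ S) (hjk : j ≠ k) :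
    ((S.powersetCard m).filter (fun A => j ∈ A ∧ k ∈ A)).card = (S.card - 2).choose (m - 2) := by
  have hk' : k ∈ S.erase j := mem_erase.2 ⟨Ne.symm hjk, hk⟩
  have hcard : ((S.erase j).erase k).card = S.card - 2 := by
    rw [card_erase_of_mem hk', card_erase_of_mem hj, Nat.sub_sub]
  rw [← hcard, ← card_powersetCard]
  apply Finset.card_bij (fun A _ => (A.erase j).erase k)
  · intro A hA
    simp only [mem_filter, mem_powersetCard] at hA
    rw [mem_powersetCard]
    constructor
    · exact erase_subset_erase k (erase_subset_erase j hA.1.1)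
    · have hkA : k ∈ A.erase j := mem_erase.2 ⟨Ne.symm hjk, hA.2.2⟩
      rw [card_erase_of_mem hkA, card_erase_of_mem hA.2.1, hA.1.2, Nat.sub_sub]
  · intro A hA A' hA' h
    simp only [mem_filter] at hA hA'
    have hkA : k ∈ A.erase j := mem_erase.2 ⟨Ne.symm hjk, hA.2.2⟩
    have hkA' : k ∈ A'.erase j := mem_erase.2 ⟨Ne.symm hjk, hA'.2.2⟩
    rw [← insert_erase hA.2.1, ← insert_erase hkA, ← insert_erase hA'.2.1, ← insert_erase hkA', h]
  · intro B hB
    rw [mem_powersetCard] at hB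
    have hkB : k ∉ B := fun h => (mem_erase.1 (hB.1 h)).1 rfl
    have hjB : j ∉ B := fun h => (mem_erase.1 (mem_of_mem_erase (hB.1 h))).1 rfl
    have hjkB : j ∉ insert k B := by
      simp only [mem_insert]
      rintro (h | h)
      exacts [hjk h, hjB h]
    refine ⟨insert j (insert k B), ?_, ?_⟩
    · simp only [mem_filter, mem_powersetCard]
      refine ⟨⟨?_, ?_⟩, mem_insert_self _ _, mem_insert_of_mem (mem_insert_self _ _)⟩
      · exact insert_subset hj (insert_subset hk
          ((hB.1.trans (erase_subset _ _)).trans (erase_subset _ _)))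
      · rw [card_insert_of_notMem hjkB, card_insert_of_notMem hkB, hB.2]
        omega
    · rw [erase_insert hjkB, erase_insert hkB]

private lemma count_pair_zero {α : Type*} [DecidableEq α] (S : Finset α)
    {j k : α} (hjk : j ≠ k) :
    ((S.powersetCard 1).filter (fun A => j ∈ A ∧ k ∈ A)).card = 0 := by
  rw [card_eq_zero, filter_eq_empty_iff]
  intro A hA
  rw [mem_powersetCard] at hA
  rintro ⟨hjA, hkA⟩
  have := Finset.one_lt_card.2 ⟨j, hjA, k, hkA, hjk⟩
  omega

private lemma count_pair_rel {α : Type*} [DecidableEq α] (S : Finset α) (m : ℕ) (hm : 1 ≤ m)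
    (hmS : m ≤ S.card) {j k : α} (hj : j ∈ S) (hk : k ∈ S) (hjk : j ≠ k) :
    ((S.card : ℝ) - 1) * (((S.powersetCard m).filter (fun A => j ∈ A ∧ k ∈ A)).card : ℝ)
      = ((m : ℝ) - 1) * ((S.card - 1).choose (m - 1) : ℝ) := by
  rcases eq_or_lt_of_le hm with h1 | h2
  · rw [← h1, count_pair_zero S hjk]
    simp
  · have hS2 : 2 ≤ S.card := le_trans h2 hmS
    rw [count_pair S m h2 hj hk hjk]
    have hnat : (S.card - 1) * (S.card - 2).choose (m - 2)
        = (m - 1) * ((S.card - 1).choose (m - 1)) := by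
      have h := Nat.add_one_mul_choose_eq (S.card - 2) (m - 2)
      have e1 : S.card - 2 + 1 = S.card - 1 := by omega
      have e2 : m - 2 + 1 = m - 1 := by omega
      rw [e1, e2] at h
      rw [h, Nat.mul_comm]
    have c1 : ((S.card : ℝ) - 1) = ((S.card - 1 : ℕ) : ℝ) := by
      rw [Nat.cast_sub (by omega)]; norm_num
    have c2 : ((m : ℝ) - 1) = ((m - 1 : ℕ) : ℝ) := by
      rw [Nat.cast_sub (by omega)]; norm_num
    rw [c1, c2, ← Nat.cast_mul, ← Nat.cast_mul, hnat]

private lemma sum_subsets {α : Type*} [DecidableEq α] (S : Finset α) (m : ℕ) (hm : 1 ≤ m)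
    (f : α → ℝ) :
    ∑ A ∈ S.powersetCard m, ∑ j ∈ A, f j
      = ((S.card - 1).choose (m - 1) : ℝ) * ∑ j ∈ S, f j := by
  have h1 : ∀ A ∈ S.powersetCard m, ∑ j ∈ A, f j = ∑ j ∈ S, if j ∈ A then f j else 0 := by
    intro A hA
    rw [sum_ite_mem, inter_eq_right.2 (mem_powersetCard.1 hA).1]
  rw [sum_congr rfl h1, sum_comm, mul_sum]
  refine sum_congr rfl fun j hj => ?_
  rw [← sum_filter, sum_const, count_single S m hm hj, nsmul_eq_mul]

private lemma sq_sum_subsets {α : Type*} [DecidableEq α] (S : Finset α) (m : ℕ) (hm : 1 ≤ m)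
    (hmS : m ≤ S.card) (f : α → ℝ) :
    ((S.card : ℝ) - 1) * ∑ A ∈ S.powersetCard m, (∑ j ∈ A, f j) ^ 2
      = ((S.card - 1).choose (m - 1) : ℝ) *
          (((S.card : ℝ) - m) * ∑ j ∈ S, f j ^ 2 + ((m : ℝ) - 1) * (∑ j ∈ S, f j) ^ 2) := by
  have expand : ∀ A ∈ S.powersetCard m, (∑ j ∈ A, f j) ^ 2
      = ∑ j ∈ S, ∑ k ∈ S, if j ∈ A ∧ k ∈ A then f j * f k else 0 := by
    intro A hA
    have hsub := (mem_powersetCard.1 hA).1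
    have h1 : ∑ j ∈ A, f j = ∑ j ∈ S, if j ∈ A then f j else 0 := by
      rw [sum_ite_mem, inter_eq_right.2 hsub]
    rw [h1, sq, sum_mul_sum]
    refine sum_congr rfl fun j _ => sum_congr rfl fun k _ => ?_
    by_cases hj : j ∈ A <;> by_cases hk : k ∈ A <;> simp [hj, hk]
  have hLHS : ∑ A ∈ S.powersetCard m, (∑ j ∈ A, f j) ^ 2
      = ∑ j ∈ S, ∑ k ∈ S,
          ((((S.powersetCard m).filter (fun A => j ∈ A ∧ k ∈ A)).card : ℝ) * (f j * f k)) := by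
    rw [sum_congr rfl expand, sum_comm]
    refine sum_congr rfl fun j hj => ?_
    rw [sum_comm]
    refine sum_congr rfl fun k hk => ?_
    rw [← sum_filter, sum_const, nsmul_eq_mul]
  rw [hLHS, mul_sum]
  have per_j : ∀ j ∈ S, ((S.card : ℝ) - 1) * ∑ k ∈ S,
        ((((S.powersetCard m).filter (fun A => j ∈ A ∧ k ∈ A)).card : ℝ) * (f j * f k))
      = ((S.card : ℝ) - 1) * ((S.card - 1).choose (m - 1) : ℝ) * f j ^ 2
        + ((m : ℝ) - 1) * ((S.card - 1).choose (m - 1) : ℝ) * ∑ k ∈ S.erase j, f j * f k := by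
    intro j hj
    rw [← Finset.sum_erase_add _ _ hj, mul_add]
    have hdiag : (((S.powersetCard m).filter (fun A => j ∈ A ∧ j ∈ A)).card : ℝ) * (f j * f j)
        = ((S.card - 1).choose (m - 1) : ℝ) * f j ^ 2 := by
      have hpred : (S.powersetCard m).filter (fun A => j ∈ A ∧ j ∈ A)
          = (S.powersetCard m).filter (fun A => j ∈ A) :=
        filter_congr (fun A _ => by simp)
      rw [hpred, count_single S m hm hj, sq]
    rw [hdiag, mul_sum]
    have hoff : ∀ k ∈ S.erase j,
        ((S.card : ℝ) - 1) *
            ((((S.powersetCard m).filter (fun A => j ∈ A ∧ k ∈ A)).card : ℝ) * (f j * f k))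
          = ((m : ℝ) - 1) * ((S.card - 1).choose (m - 1) : ℝ) * (f j * f k) := by
      intro k hk
      have h := count_pair_rel S m hm hmS hj (mem_of_mem_erase hk) (Ne.symm (ne_of_mem_erase hk))
      rw [← mul_assoc, h, mul_assoc]
    rw [sum_congr rfl hoff, ← mul_sum]
    ring
  rw [sum_congr rfl per_j, sum_add_distrib, ← mul_sum, ← mul_sum]
  have offdiag : ∑ j ∈ S, ∑ k ∈ S.erase j, f j * f k
      = (∑ j ∈ S, f j) ^ 2 - ∑ j ∈ S, f j ^ 2 := by
    have h1 : ∀ j ∈ S, ∑ k ∈ S.erase j, f j * f k = f j * ∑ k ∈ S, f k - f j ^ 2 := by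
      intro j hj
      rw [← Finset.mul_sum, Finset.sum_erase_eq_sub hj]
      ring
    rw [sum_congr rfl h1, sum_sub_distrib, ← sum_mul]
    ring
  rw [offdiag]
  ring
set_option maxHeartbeats 2000000 in
theorem stmt_13 (n n_c s : ℕ) (hnc : 2 ≤ n_c) (hns : n = n_c * s)
    (p q : ℝ) (hp0 : 0 < p) (hp1 : p < 1) (hpq : p ≤ q) (hq1 : q ≤ 1)
    (hpnq : q < p * (n : ℝ))
    (Cl : Finset (Finset (Fin n))) (hClcard : Cl.card = n_c)
    (hdisj : ∀ π ∈ Cl, ∀ π' ∈ Cl, π ≠ π' → Disjoint π π')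
    (hcover : ∀ i : Fin n, ∃ π ∈ Cl, i ∈ π)
    (hsize : ∀ π ∈ Cl, π.card = s)
    (kc : ℕ) (hkc : (kc : ℝ) = p * (n_c : ℝ) / q)
    (m : ℕ) (hm : (m : ℝ) = p * (n : ℝ))
    (Nbhd : Fin n → Finset (Fin n)) (c0 : Fin n → ℝ) (c1 : Fin n → Fin n → ℝ)
    (Y : Fin n → Finset (Fin n) → ℝ)
    (hY : ∀ i T, Y i T = c0 i + ∑ j ∈ Nbhd i, c1 i j * (if j ∈ T then (1 : ℝ) else 0))
    (L : Fin n → ℝ)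
    (hL : ∀ j, L j = ∑ i ∈ Finset.univ.filter (fun i => j ∈ Nbhd i), c1 i j)
    (Lbar : Finset (Fin n) → ℝ)
    (hLbar : ∀ π, Lbar π = ((n_c : ℝ) / (n : ℝ)) * ∑ j ∈ π, L j)
    (TTEhat : Finset (Finset (Fin n)) → Finset (Fin n) → ℝ)
    (hT : ∀ C A, TTEhat C A = (1 / ((n : ℝ) * p)) * ∑ i, (Y i A - Y i ∅))
    (E : (Finset (Finset (Fin n)) → Finset (Fin n) → ℝ) → ℝ)
    (hE : ∀ g, E g =
      (∑ C ∈ Cl.powersetCard kc, ∑ A ∈ (C.sup id).powersetCard m, g C A) /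
        ((n_c.choose kc : ℝ) * ((kc * s).choose m : ℝ))) :
    E (fun C A => (TTEhat C A) ^ 2) - (E TTEhat) ^ 2 =
      ((1 - q) / (p * (n : ℝ) - q)) *
          ((1 / (n : ℝ)) * ∑ j, (L j) ^ 2 - ((1 / (n : ℝ)) * ∑ j, L j) ^ 2) +
        ((q - p) * (p * (n : ℝ) - 1) / (p * ((n_c : ℝ) - 1) * (p * (n : ℝ) - q))) *
          ((1 / (n_c : ℝ)) * ∑ π ∈ Cl, (Lbar π) ^ 2 -
            ((1 / (n_c : ℝ)) * ∑ π ∈ Cl, Lbar π) ^ 2) := by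
  -- ===== basic scalar facts =====
  have hq0 : 0 < q := lt_of_lt_of_le hp0 hpq
  have hpn : (0 : ℝ) < p * n := lt_trans hq0 hpnq
  have hnR : (0 : ℝ) < (n : ℝ) := by nlinarith
  have hn_pos : 0 < n := by exact_mod_cast hnR
  have hs_pos : 0 < s := by
    rcases Nat.eq_zero_or_pos s with h | h
    · rw [h, Nat.mul_zero] at hns; omega
    · exact h
  have hncR : (2 : ℝ) ≤ (n_c : ℝ) := by exact_mod_cast hnc
  have hnsR : (n : ℝ) = (n_c : ℝ) * s := by exact_mod_cast hns
  have hkcq : (kc : ℝ) * q = p * n_c := by rw [hkc]; field_simp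
  have hmR0 : (0 : ℝ) < (m : ℝ) := by rw [hm]; exact hpn
  have hm1 : 1 ≤ m := by exact_mod_cast Nat.one_le_cast.2 (by exact_mod_cast hmR0)
  have hkcR0 : (0 : ℝ) < (kc : ℝ) := by
    nlinarith [hkcq]
  have hkc1 : 1 ≤ kc := by exact_mod_cast Nat.one_le_cast.2 (by exact_mod_cast hkcR0)
  have hkcle : kc ≤ n_c := by
    have : (kc : ℝ) ≤ (n_c : ℝ) := by nlinarith [hkcq]
    exact_mod_cast this
  have hNq : q * ((kc * s : ℕ) : ℝ) = (m : ℝ) := by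
    push_cast
    rw [hm, hnsR]
    linear_combination (s : ℝ) * hkcq
  have hNR1 : (1 : ℝ) < ((kc * s : ℕ) : ℝ) := by nlinarith [hNq, hpnq, hm]
  have hmleN : m ≤ kc * s := by
    have : (m : ℝ) ≤ ((kc * s : ℕ) : ℝ) := by nlinarith [hNq]
    exact_mod_cast this
  have hN1 : 1 ≤ kc * s := by
    have : (1 : ℝ) ≤ ((kc * s : ℕ) : ℝ) := le_of_lt hNR1
    exact_mod_cast this
  -- ===== TTEhat closed form =====
  have hF : ∀ (C : Finset (Finset (Fin n))) (A : Finset (Fin n)),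
      TTEhat C A = 1 / ((n : ℝ) * p) * ∑ j ∈ A, L j := by
    intro C A
    rw [hT]
    congr 1
    have h1 : ∀ i, Y i A - Y i ∅ = ∑ j : Fin n,
        if j ∈ Nbhd i then c1 i j * (if j ∈ A then (1 : ℝ) else 0) else 0 := by
      intro i
      have e : ∑ j : Fin n, (if j ∈ Nbhd i then c1 i j * (if j ∈ A then (1 : ℝ) else 0) else 0)
          = ∑ j ∈ Nbhd i, c1 i j * (if j ∈ A then (1 : ℝ) else 0) := by
        rw [sum_ite_mem, univ_inter]
      rw [hY, hY, e]
      simp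
    calc ∑ i, (Y i A - Y i ∅)
        = ∑ i, ∑ j : Fin n,
            (if j ∈ Nbhd i then c1 i j * (if j ∈ A then (1 : ℝ) else 0) else 0) :=
          sum_congr rfl fun i _ => h1 i
      _ = ∑ j : Fin n, ∑ i,
            (if j ∈ Nbhd i then c1 i j * (if j ∈ A then (1 : ℝ) else 0) else 0) := sum_comm
      _ = ∑ j : Fin n, L j * (if j ∈ A then (1 : ℝ) else 0) := by
          refine sum_congr rfl fun j _ => ?_
          rw [← sum_filter, ← sum_mul, hL j]
      _ = ∑ j ∈ A, L j := by
          simp only [mul_ite, mul_one, mul_zero]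
          rw [sum_ite_mem, univ_inter]
  -- ===== partition facts =====
  have hunivb : (univ : Finset (Fin n)) = Cl.biUnion id := by
    ext j
    simp only [mem_univ, mem_biUnion, id, true_iff]
    exact hcover j
  have hpdCl : (↑Cl : Set (Finset (Fin n))).PairwiseDisjoint id :=
    fun a ha b hb hab => hdisj a ha b hb hab
  have hsumu : ∀ g : Fin n → ℝ, ∑ j, g j = ∑ π ∈ Cl, ∑ j ∈ π, g j := by
    intro g
    rw [hunivb, Finset.sum_biUnion hpdCl]
    simp only [id_eq]
  -- per-C facts
  have hUcard : ∀ C ∈ Cl.powersetCard kc, (C.sup id).card = kc * s := by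
    intro C hC
    obtain ⟨hCsub, hCcard⟩ := mem_powersetCard.1 hC
    rw [Finset.sup_eq_biUnion, Finset.card_biUnion (t := id)
      (fun x hx y hy hxy => hdisj x (hCsub hx) y (hCsub hy) hxy)]
    simp only [id_eq]
    rw [sum_congr rfl fun π hπ => hsize π (hCsub hπ), sum_const, hCcard, smul_eq_mul]
  have hUsum : ∀ C ∈ Cl.powersetCard kc, ∀ g : Fin n → ℝ,
      ∑ j ∈ C.sup id, g j = ∑ π ∈ C, ∑ j ∈ π, g j := by
    intro C hC g
    obtain ⟨hCsub, _⟩ := mem_powersetCard.1 hC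
    rw [Finset.sup_eq_biUnion, Finset.sum_biUnion (t := id)
      (fun a ha b hb hab => hdisj a (hCsub ha) b (hCsub hb) hab)]
    simp only [id_eq]
  -- ===== inner sums =====
  have step1 : ∀ C ∈ Cl.powersetCard kc,
      ∑ A ∈ (C.sup id).powersetCard m, ∑ j ∈ A, L j
        = ((kc * s - 1).choose (m - 1) : ℝ) * ∑ π ∈ C, ∑ j ∈ π, L j := by
    intro C hC
    rw [sum_subsets (C.sup id) m hm1 L, hUcard C hC, hUsum C hC L]
  have step2 : ∀ C ∈ Cl.powersetCard kc,
      (((kc * s : ℕ) : ℝ) - 1) * ∑ A ∈ (C.sup id).powersetCard m, (∑ j ∈ A, L j) ^ 2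
        = ((kc * s - 1).choose (m - 1) : ℝ) * ((((kc * s : ℕ) : ℝ) - m)
            * ∑ π ∈ C, ∑ j ∈ π, L j ^ 2
          + ((m : ℝ) - 1) * (∑ π ∈ C, ∑ j ∈ π, L j) ^ 2) := by
    intro C hC
    have h := sq_sum_subsets (C.sup id) m hm1 (by rw [hUcard C hC]; exact hmleN) L
    rw [hUcard C hC] at h
    rw [h, hUsum C hC L, hUsum C hC (fun j => L j ^ 2)]
  -- ===== outer sums =====
  have outer1 : ∑ C ∈ Cl.powersetCard kc, ∑ π ∈ C, ∑ j ∈ π, L j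
      = ((n_c - 1).choose (kc - 1) : ℝ) * ∑ j, L j := by
    rw [sum_subsets Cl kc hkc1 (fun π => ∑ j ∈ π, L j), hClcard, ← hsumu L]
  have outer1W : ∑ C ∈ Cl.powersetCard kc, ∑ π ∈ C, ∑ j ∈ π, L j ^ 2
      = ((n_c - 1).choose (kc - 1) : ℝ) * ∑ j, L j ^ 2 := by
    rw [sum_subsets Cl kc hkc1 (fun π => ∑ j ∈ π, L j ^ 2), hClcard,
      ← hsumu (fun j => L j ^ 2)]
  have outer2 : ((n_c : ℝ) - 1) * ∑ C ∈ Cl.powersetCard kc, (∑ π ∈ C, ∑ j ∈ π, L j) ^ 2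
      = ((n_c - 1).choose (kc - 1) : ℝ) *
          (((n_c : ℝ) - kc) * ∑ π ∈ Cl, (∑ j ∈ π, L j) ^ 2
            + ((kc : ℝ) - 1) * (∑ π ∈ Cl, ∑ j ∈ π, L j) ^ 2) := by
    have h := sq_sum_subsets Cl kc hkc1 (by rw [hClcard]; exact hkcle)
      (fun π => ∑ j ∈ π, L j)
    rw [hClcard] at h
    exact h
  -- ===== numerators =====
  have num1 : ∑ C ∈ Cl.powersetCard kc, ∑ A ∈ (C.sup id).powersetCard m, TTEhat C A
      = 1 / ((n : ℝ) * p) * (((kc * s - 1).choose (m - 1) : ℝ)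
          * (((n_c - 1).choose (kc - 1) : ℝ) * ∑ j, L j)) := by
    have e : ∀ C ∈ Cl.powersetCard kc,
        ∑ A ∈ (C.sup id).powersetCard m, TTEhat C A
          = 1 / ((n : ℝ) * p) * (((kc * s - 1).choose (m - 1) : ℝ) * ∑ π ∈ C, ∑ j ∈ π, L j) := by
      intro C hC
      rw [sum_congr rfl (fun A _ => hF C A), ← mul_sum, step1 C hC]
    rw [sum_congr rfl e, ← mul_sum, ← mul_sum, outer1]
  have num2 : ((n_c : ℝ) - 1) * ((((kc * s : ℕ) : ℝ) - 1) *
        ∑ C ∈ Cl.powersetCard kc, ∑ A ∈ (C.sup id).powersetCard m, (TTEhat C A) ^ 2)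
      = (1 / ((n : ℝ) * p)) ^ 2 * (((kc * s - 1).choose (m - 1) : ℝ)
          * ((n_c - 1).choose (kc - 1) : ℝ) *
          (((n_c : ℝ) - 1) * ((((kc * s : ℕ) : ℝ)) - m) * (∑ j, L j ^ 2)
            + ((m : ℝ) - 1) * ((n_c : ℝ) - kc) * (∑ π ∈ Cl, (∑ j ∈ π, L j) ^ 2)
            + ((m : ℝ) - 1) * ((kc : ℝ) - 1) * (∑ j, L j) ^ 2)) := by
    have e : ∀ C ∈ Cl.powersetCard kc,
        (((kc * s : ℕ) : ℝ) - 1) * ∑ A ∈ (C.sup id).powersetCard m, (TTEhat C A) ^ 2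
          = (1 / ((n : ℝ) * p)) ^ 2 * (((kc * s - 1).choose (m - 1) : ℝ)
              * ((((kc * s : ℕ) : ℝ) - m) * ∑ π ∈ C, ∑ j ∈ π, L j ^ 2)
            + ((kc * s - 1).choose (m - 1) : ℝ)
              * (((m : ℝ) - 1) * (∑ π ∈ C, ∑ j ∈ π, L j) ^ 2)) := by
      intro C hC
      rw [sum_congr rfl (fun A _ => by rw [hF C A, mul_pow]), ← mul_sum]
      linear_combination (1 / ((n : ℝ) * p)) ^ 2 * step2 C hC
    have hs2 : (((kc * s : ℕ) : ℝ) - 1) *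
        ∑ C ∈ Cl.powersetCard kc, ∑ A ∈ (C.sup id).powersetCard m, (TTEhat C A) ^ 2
        = (1 / ((n : ℝ) * p)) ^ 2 * (((kc * s - 1).choose (m - 1) : ℝ)
            * ((((kc * s : ℕ) : ℝ) - m)
              * ∑ C ∈ Cl.powersetCard kc, ∑ π ∈ C, ∑ j ∈ π, L j ^ 2)
          + ((kc * s - 1).choose (m - 1) : ℝ) * (((m : ℝ) - 1)
              * ∑ C ∈ Cl.powersetCard kc, (∑ π ∈ C, ∑ j ∈ π, L j) ^ 2)) := by
      rw [mul_sum, sum_congr rfl e, ← mul_sum, sum_add_distrib, ← mul_sum, ← mul_sum,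
        ← mul_sum, ← mul_sum, mul_add]
    have outer2' := outer2
    rw [← hsumu L] at outer2'
    linear_combination ((n_c : ℝ) - 1) * hs2
      + (1 / ((n : ℝ) * p)) ^ 2 * ((kc * s - 1).choose (m - 1) : ℝ)
          * ((((kc * s : ℕ) : ℝ)) - m) * (((n_c : ℝ) - 1)) * outer1W
      + (1 / ((n : ℝ) * p)) ^ 2 * ((kc * s - 1).choose (m - 1) : ℝ)
          * (((m : ℝ) - 1)) * outer2'
  -- ===== choose relations =====
  have relQ : n_c * ((n_c - 1).choose (kc - 1)) = n_c.choose kc * kc := by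
    have h := Nat.add_one_mul_choose_eq (n_c - 1) (kc - 1)
    have e1 : n_c - 1 + 1 = n_c := by omega
    have e2 : kc - 1 + 1 = kc := by omega
    rw [e1, e2] at h
    exact h
  have relD : (kc * s) * ((kc * s - 1).choose (m - 1)) = (kc * s).choose m * m := by
    have h := Nat.add_one_mul_choose_eq (kc * s - 1) (m - 1)
    have e1 : kc * s - 1 + 1 = kc * s := by omega
    have e2 : m - 1 + 1 = m := by omega
    rw [e1, e2] at h
    exact h
  have relQR : (n_c : ℝ) * ((n_c - 1).choose (kc - 1) : ℝ) = (n_c.choose kc : ℝ) * kc := by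
    exact_mod_cast relQ
  have relDR : ((kc * s : ℕ) : ℝ) * ((kc * s - 1).choose (m - 1) : ℝ)
      = ((kc * s).choose m : ℝ) * m := by
    exact_mod_cast relD
  -- ===== nonzero facts =====
  have hC0ne : ((n_c.choose kc : ℕ) : ℝ) ≠ 0 := by
    have := Nat.choose_pos hkcle
    positivity
  have hD0ne : (((kc * s).choose m : ℕ) : ℝ) ≠ 0 := by
    have := Nat.choose_pos hmleN
    positivity
  have hncne : (n_c : ℝ) ≠ 0 := by positivity
  have hsne : (s : ℝ) ≠ 0 := by positivity
  have hnne : (n : ℝ) ≠ 0 := ne_of_gt hnR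
  have hpne : p ≠ 0 := ne_of_gt hp0
  have hqne : q ≠ 0 := ne_of_gt hq0
  have hnc1ne : (n_c : ℝ) - 1 ≠ 0 :=
    sub_ne_zero.2 (ne_of_gt (lt_of_lt_of_le one_lt_two hncR))
  have hNR1ne : (((kc * s : ℕ) : ℝ)) - 1 ≠ 0 := sub_ne_zero.2 (ne_of_gt hNR1)
  have hNRne : (((kc * s : ℕ) : ℝ)) ≠ 0 := ne_of_gt (lt_trans one_pos hNR1)
  have hden : ((n_c : ℝ) - 1) * ((((kc * s : ℕ) : ℝ)) - 1) ≠ 0 := mul_ne_zero hnc1ne hNR1ne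
  have hmqne : p * (n : ℝ) - q ≠ 0 := sub_ne_zero.2 (ne_of_gt hpnq)
  have hmqne2 : p * ((n_c : ℝ) * s) - q ≠ 0 := by rw [← hnsR]; exact hmqne
  have hmqne3 : p * (n_c : ℝ) * s - q ≠ 0 := by
    have : p * (n_c : ℝ) * s = p * ((n_c : ℝ) * s) := by ring
    rw [this]; exact hmqne2
  -- ===== value extraction =====
  have esq : ∑ C ∈ Cl.powersetCard kc, ∑ A ∈ (C.sup id).powersetCard m, (TTEhat C A) ^ 2
      = (1 / ((n : ℝ) * p)) ^ 2 * (((kc * s - 1).choose (m - 1) : ℝ)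
          * ((n_c - 1).choose (kc - 1) : ℝ) *
          (((n_c : ℝ) - 1) * ((((kc * s : ℕ) : ℝ)) - m) * (∑ j, L j ^ 2)
            + ((m : ℝ) - 1) * ((n_c : ℝ) - kc) * (∑ π ∈ Cl, (∑ j ∈ π, L j) ^ 2)
            + ((m : ℝ) - 1) * ((kc : ℝ) - 1) * (∑ j, L j) ^ 2))
          / (((n_c : ℝ) - 1) * ((((kc * s : ℕ) : ℝ)) - 1)) := by
    rw [eq_div_iff hden]
    linear_combination num2
  have hC1val : ((kc * s - 1).choose (m - 1) : ℝ)
      = (m : ℝ) * (((kc * s).choose m : ℕ) : ℝ) / (((kc * s : ℕ) : ℝ)) := by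
    rw [eq_div_iff hNRne]
    linear_combination relDR
  have hQ1val : ((n_c - 1).choose (kc - 1) : ℝ)
      = (kc : ℝ) * ((n_c.choose kc : ℕ) : ℝ) / (n_c : ℝ) := by
    rw [eq_div_iff hncne]
    linear_combination relQR
  -- Lbar sums
  have hLb1 : ∑ π ∈ Cl, Lbar π = ((n_c : ℝ) / (n : ℝ)) * ∑ j, L j := by
    rw [sum_congr rfl (fun π _ => hLbar π), ← mul_sum, ← hsumu L]
  have hLb2 : ∑ π ∈ Cl, (Lbar π) ^ 2
      = ((n_c : ℝ) / (n : ℝ)) ^ 2 * ∑ π ∈ Cl, (∑ j ∈ π, L j) ^ 2 := by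
    rw [sum_congr rfl (fun π _ => by rw [hLbar π, mul_pow]), ← mul_sum]
  -- ===== final assembly =====
  rw [hE, hE, esq, num1, hC1val, hQ1val, hLb1, hLb2]
  push_cast
  rw [hm, hkc, hnsR]
  have hmqne4 : (n_c : ℝ) * s * p - q ≠ 0 := by
    have : (n_c : ℝ) * s * p = p * (n_c : ℝ) * s := by ring
    rw [this]; exact hmqne3
  field_simp
  ring
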